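/- (Bisector avoidance near a cusp.) Let p ∈ V be a future-pointing null vector and let 0 < c < d be real numbers. Let y ∈ H with B(y,p) = c, and let K be a compact subset of the horosphere {x ∈ H : B(x,p) = c} with y ∈ K. Let D_p = H ∩ cone({p} ∪ K), where cone(S) denotes the set of all nonnegative finite linear combinations of elements of S (so D_p is the hyperbolic convex hull of p and K). Then there exists a real number a with 0 < a < c such that for every z ∈ H with B(z,p) > d and every x ∈ D_p with B(x,p) ≤ a, one has B(x,y) ≠ B(x,z); that is, the hyperplane of points equidistant from y and z does not meet D_p ∩ aU_p. -/

import Mathlib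

/-- The Minkowski bilinear form of signature `(1,n)` on `ℝ^{n+1}`:
`B x y = x₀ y₀ - ∑_{i=1}^n xᵢ yᵢ`. -/
def B (n : ℕ) (x y : Fin (n + 1) → ℝ) : ℝ :=
  x 0 * y 0 - ∑ i : Fin n, x i.succ * y i.succ

/-- The hyperboloid model `H = {x : B(x,x) = 1, x₀ > 0}` of hyperbolic `n`-space. -/
def hyperboloid (n : ℕ) : Set (Fin (n + 1) → ℝ) := {x | B n x x = 1 ∧ 0 < x 0}

/-- The cone on a set `S ⊆ V`: all nonnegative finite linear combinations of
elements of `S`. -/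
def coneOf (n : ℕ) (S : Set (Fin (n + 1) → ℝ)) : Set (Fin (n + 1) → ℝ) :=
  {x | ∃ (t : Finset (Fin (n + 1) → ℝ)) (c : (Fin (n + 1) → ℝ) → ℝ),
    ↑t ⊆ S ∧ (∀ v, 0 ≤ c v) ∧ x = ∑ v ∈ t, c v • v}

lemma B_symm (n : ℕ) (x y : Fin (n + 1) → ℝ) : B n x y = B n y x := by
  unfold B
  congr 1
  · ring
  · exact Finset.sum_congr rfl fun i _ => mul_comm _ _

lemma B_add_left (n : ℕ) (x x' y : Fin (n + 1) → ℝ) :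
    B n (x + x') y = B n x y + B n x' y := by
  unfold B
  simp only [Pi.add_apply, add_mul, Finset.sum_add_distrib]
  ring

lemma B_smul_left (n : ℕ) (r : ℝ) (x y : Fin (n + 1) → ℝ) :
    B n (r • x) y = r * B n x y := by
  unfold B
  simp only [Pi.smul_apply, smul_eq_mul, Finset.mul_sum, mul_sub, mul_assoc]

lemma B_sum_left (n : ℕ) {ι : Type*} (t : Finset ι) (f : ι → (Fin (n + 1) → ℝ))
    (y : Fin (n + 1) → ℝ) :
    B n (∑ v ∈ t, f v) y = ∑ v ∈ t, B n (f v) y := by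
  classical
  induction t using Finset.induction_on with
  | empty => simp [B]
  | insert _ _ h ih => rw [Finset.sum_insert h, Finset.sum_insert h, B_add_left, ih]

lemma B_cont (n : ℕ) :
    Continuous fun q : ((Fin (n + 1) → ℝ) × (Fin (n + 1) → ℝ)) => B n q.1 q.2 := by
  unfold B
  fun_prop

lemma one_le_B (n : ℕ) {x y : Fin (n + 1) → ℝ}
    (hx : x ∈ hyperboloid n) (hy : y ∈ hyperboloid n) : 1 ≤ B n x y := by
  obtain ⟨hx1, hx0⟩ := hx
  obtain ⟨hy1, hy0⟩ := hy
  set U := ∑ i : Fin n, x i.succ ^ 2 with hU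
  set V := ∑ i : Fin n, y i.succ ^ 2 with hV
  set S := ∑ i : Fin n, x i.succ * y i.succ with hS
  have hU0 : 0 ≤ U := Finset.sum_nonneg fun i _ => sq_nonneg _
  have hV0 : 0 ≤ V := Finset.sum_nonneg fun i _ => sq_nonneg _
  have hxU : x 0 * x 0 = 1 + U := by
    unfold B at hx1
    have : ∑ i : Fin n, x i.succ * x i.succ = U := by
      rw [hU]; exact Finset.sum_congr rfl fun i _ => (sq (x i.succ)).symm
    linarith
  have hyV : y 0 * y 0 = 1 + V := by
    unfold B at hy1
    have : ∑ i : Fin n, y i.succ * y i.succ = V := by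
      rw [hV]; exact Finset.sum_congr rfl fun i _ => (sq (y i.succ)).symm
    linarith
  have hCS : S ^ 2 ≤ U * V := Finset.sum_mul_sq_le_sq_mul_sq _ _ _
  have h2S : 2 * S ≤ U + V := by nlinarith [sq_nonneg (U - V), sq_nonneg (U + V - 2 * S)]
  have hBxy : B n x y = x 0 * y 0 - S := rfl
  rw [hBxy]
  nlinarith [mul_pos hx0 hy0, sq_nonneg (x 0 * y 0 - (1 + S)), sq_nonneg (x 0 * y 0 + (1 + S))]

set_option maxHeartbeats 1000000 in
/-- Bisector avoidance near a cusp: for `y` on the horosphere `{B(·,p) = c}` and `K` a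
compact piece of that horosphere containing `y`, there is `0 < a < c` such that no point
of the hyperbolic convex hull `D_p` of `p` and `K` lying in the horoball `aU_p` is
equidistant from `y` and from any point `z` outside the horoball `dU_p`. -/
theorem bisector_avoidance (n : ℕ) (hn : 1 ≤ n)
    (p : Fin (n + 1) → ℝ) (hp : B n p p = 0) (hp0 : 0 < p 0)
    (c d : ℝ) (hc : 0 < c) (hcd : c < d)
    (y : Fin (n + 1) → ℝ) (hy : y ∈ hyperboloid n) (hyp : B n y p = c)
    (K : Set (Fin (n + 1) → ℝ))
    (hK : K ⊆ {x ∈ hyperboloid n | B n x p = c})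
    (hKcpt : IsCompact K) (hyK : y ∈ K) :
    ∃ a : ℝ, 0 < a ∧ a < c ∧
      ∀ z ∈ hyperboloid n, d < B n z p →
        ∀ x ∈ hyperboloid n ∩ coneOf n ({p} ∪ K),
          B n x p ≤ a → B n x y ≠ B n x z := by
  classical
  -- an upper bound M for B on K × K
  obtain ⟨q, hq, hMmax⟩ := (hKcpt.prod hKcpt).exists_isMaxOn
    ⟨(y, y), Set.mk_mem_prod hyK hyK⟩ ((B_cont n).continuousOn)
  set M : ℝ := B n q.1 q.2 with hMdef
  have hMb : ∀ j ∈ K, ∀ k ∈ K, B n j k ≤ M := fun j hj k hk =>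
    isMaxOn_iff.mp hMmax (j, k) ⟨hj, hk⟩
  have hM1 : 1 ≤ M := le_trans hy.1.symm.le (hMb y hyK y hyK)
  -- the constant and the choice of a
  set C : ℝ := 2 * c * (M - 1) + M * (d - c) + 1 with hCdef
  have hCpos : 0 < C := by nlinarith
  have hdcC : 0 < (d - c) / C := div_pos (by linarith) hCpos
  set t₀ : ℝ := min 1 (Real.sqrt ((d - c) / C)) / 2 with ht₀def
  have ht₀pos : 0 < t₀ := by
    have : 0 < min 1 (Real.sqrt ((d - c) / C)) :=
      lt_min one_pos (Real.sqrt_pos.mpr hdcC)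
    positivity
  have ht₀lt1 : t₀ < 1 := by
    have h1 : min 1 (Real.sqrt ((d - c) / C)) ≤ 1 := min_le_left _ _
    rw [ht₀def]; linarith
  have ht₀sq : t₀ * t₀ ≤ (d - c) / C := by
    have h1 : t₀ ≤ Real.sqrt ((d - c) / C) := by
      have := min_le_right 1 (Real.sqrt ((d - c) / C))
      rw [ht₀def]
      have h0 : 0 ≤ Real.sqrt ((d - c) / C) := Real.sqrt_nonneg _
      linarith
    calc t₀ * t₀ ≤ Real.sqrt ((d - c) / C) * Real.sqrt ((d - c) / C) :=
          mul_le_mul h1 h1 ht₀pos.le (Real.sqrt_nonneg _)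
      _ = (d - c) / C := Real.mul_self_sqrt hdcC.le
  refine ⟨c * t₀, by positivity, by nlinarith, ?_⟩
  intro z hz hzd x hx hxa
  obtain ⟨hxH, t, co, htsub, hco, hxsum⟩ := hx
  -- decompose x = s • p + w
  set s : ℝ := if p ∈ t then co p else 0 with hsdef
  set t' := t.erase p with ht'def
  set w : Fin (n + 1) → ℝ := ∑ v ∈ t', co v • v with hwdef
  set T : ℝ := ∑ v ∈ t', co v with hTdef
  have hmem : ∀ v ∈ t', v ∈ K := by
    intro v hv
    rcases Finset.mem_erase.mp hv with ⟨hvp, hvt⟩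
    rcases htsub hvt with h | h
    · exact absurd (Set.mem_singleton_iff.mp h) hvp
    · exact h
  have hxw : x = s • p + w := by
    by_cases hpt : p ∈ t
    · rw [hxsum, ← Finset.add_sum_erase t _ hpt, hsdef, if_pos hpt, hwdef, ht'def]
    · rw [hxsum, hwdef, ht'def, Finset.erase_eq_of_notMem hpt, hsdef, if_neg hpt]
      simp
  have hs0 : 0 ≤ s := by
    rw [hsdef]; split
    · exact hco p
    · exact le_refl 0
  have hT0 : 0 ≤ T := Finset.sum_nonneg fun v _ => hco v
  have hBw : ∀ u, B n w u = ∑ v ∈ t', co v * B n v u := by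
    intro u
    rw [hwdef, B_sum_left]
    exact Finset.sum_congr rfl fun v _ => B_smul_left n (co v) v u
  have hxu : ∀ u, B n x u = s * B n p u + B n w u := by
    intro u
    rw [hxw, B_add_left, B_smul_left]
  have hwp : B n w p = c * T := by
    rw [hBw p]
    rw [Finset.sum_congr rfl fun v hv => by rw [(hK (hmem v hv)).2]]
    rw [← Finset.sum_mul, hTdef, mul_comm]
  have hxp : B n x p = c * T := by
    rw [hxu p, hp, hwp]; ring
  have hTt₀ : T ≤ t₀ := by
    have : c * T ≤ c * t₀ := by rw [← hxp]; exact hxa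
    exact le_of_mul_le_mul_left this hc
  have hTC : T * T * C ≤ d - c := by
    have h1 : T * T ≤ t₀ * t₀ := mul_le_mul hTt₀ hTt₀ hT0 ht₀pos.le
    have h2 : T * T ≤ (d - c) / C := h1.trans ht₀sq
    exact (le_div_iff₀ hCpos).mp h2
  have hww : B n w w ≤ M * (T * T) := by
    rw [hBw w]
    have inner : ∀ v ∈ t', co v * B n v w ≤ co v * (T * M) := by
      intro v hv
      refine mul_le_mul_of_nonneg_left ?_ (hco v)
      rw [B_symm n v w, hBw v]
      calc ∑ u ∈ t', co u * B n u v
          ≤ ∑ u ∈ t', co u * M :=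
            Finset.sum_le_sum fun u hu =>
              mul_le_mul_of_nonneg_left (hMb u (hmem u hu) v (hmem v hv)) (hco u)
        _ = T * M := by rw [← Finset.sum_mul]
    calc ∑ v ∈ t', co v * B n v w ≤ ∑ v ∈ t', co v * (T * M) := Finset.sum_le_sum inner
      _ = T * (T * M) := by rw [← Finset.sum_mul]
      _ = M * (T * T) := by ring
  have hBxx : 1 = 2 * (s * (c * T)) + B n w w := by
    have e1 : B n x x = s * B n p x + B n w x := hxu x
    have e2 : B n p x = c * T := by rw [B_symm n p x, hxp]
    have e3 : B n w x = s * (c * T) + B n w w := by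
      rw [B_symm n w x, hxu w, B_symm n p w, hwp]
    rw [e2, e3, hxH.1] at e1
    linarith
  have hTpos : 0 < T := by
    rcases lt_or_eq_of_le hT0 with h | h
    · exact h
    · exfalso
      rw [← h] at hBxx hww
      simp only [mul_zero, zero_mul] at hBxx hww
      linarith
  have hMTT : M * (T * T) < 1 := by
    have h1 : M * (T * T) * C ≤ M * (d - c) := by
      have := mul_le_mul_of_nonneg_left hTC (by linarith : (0:ℝ) ≤ M)
      nlinarith
    nlinarith [mul_pos hTpos hTpos]
  have hspos : 0 < s := by
    have h1 : 0 < s * (c * T) := by linarith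
    by_contra h
    exact absurd h1 (not_lt.mpr
      (mul_nonpos_of_nonpos_of_nonneg (not_lt.mp h) (mul_pos hc hTpos).le))
  -- the two estimates
  have hxyle : B n x y ≤ s * c + M * T := by
    have e := hxu y
    have hpy : B n p y = c := by rw [B_symm n p y]; exact hyp
    have hwy : B n w y ≤ M * T := by
      rw [hBw y]
      calc ∑ v ∈ t', co v * B n v y
          ≤ ∑ v ∈ t', co v * M :=
            Finset.sum_le_sum fun v hv =>
              mul_le_mul_of_nonneg_left (hMb v (hmem v hv) y hyK) (hco v)
        _ = T * M := by rw [← Finset.sum_mul]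
        _ = M * T := by ring
    rw [e, hpy]
    linarith
  have hxzgt : s * d + T < B n x z := by
    have e := hxu z
    have hpz : d < B n p z := by rw [B_symm n p z]; exact hzd
    have hwz : T ≤ B n w z := by
      rw [hBw z]
      calc T = ∑ v ∈ t', co v * 1 := by rw [hTdef]; simp
        _ ≤ ∑ v ∈ t', co v * B n v z :=
            Finset.sum_le_sum fun v hv =>
              mul_le_mul_of_nonneg_left (one_le_B n (hK (hmem v hv)).1 hz) (hco v)
    have hsd : s * d < s * B n p z := mul_lt_mul_of_pos_left hpz hspos
    rw [e]
    linarith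
  intro heq
  have hE : s * d + T < s * c + M * T := by
    rw [heq] at hxyle
    linarith
  have hE2 : (2 * (c * T)) * (s * d + T) < (2 * (c * T)) * (s * c + M * T) :=
    mul_lt_mul_of_pos_left hE (by positivity)
  have hB2 : (d - c) * B n w w ≤ (d - c) * (M * (T * T)) :=
    mul_le_mul_of_nonneg_left hww (by linarith)
  nlinarith [hE2, hB2, hBxx, hTC, mul_pos hTpos hTpos]
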